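/- Let the group G act on the left on a topological space X, and let h : G × X → ℂˣ be a 1-cocycle on the action groupoid, i.e. h(a·b, x) = h(a, b•x)·h(b, x) for all a,b ∈ G and x ∈ X, such that for each k ∈ G the function x ↦ h(k,x) is locally constant on X. If x ∈ X and g ∈ G are such that x and g•x are joined by a path in X, then for every k ∈ G one has h(k·g·k⁻¹, k•x) = h(g, x). (This is the flat global-quotient case of the theorem that the holonomy H(φ,g) = h(g,φ(0))⁻¹ of a flat line bundle over the orbifold [X/G] is invariant under the arrows of the loop groupoid, i.e. δH = 1.) -/

import Mathlib

/-- Flat global-quotient case of the holonomy theorem: the holonomy of a flat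
line bundle over `[X/G]` is invariant under the arrows of the loop groupoid. -/
theorem flat_holonomy_invariant {G X : Type*} [Group G] [TopologicalSpace X]
    [MulAction G X] (h : G → X → ℂˣ)
    (hcoc : ∀ (a b : G) (x : X), h (a * b) x = h a (b • x) * h b x)
    (hlc : ∀ k : G, IsLocallyConstant (fun x : X => h k x))
    (x : X) (g : G) (hpath : Joined x (g • x)) :
    ∀ k : G, h (k * g * k⁻¹) (k • x) = h g x := by
  intro k
  have hone : h 1 x = 1 := by
    have := hcoc 1 1 x
    simp only [one_mul, one_smul] at this
    exact (mul_eq_left.mp this.symm)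
  have hinv : h k⁻¹ (k • x) = (h k x)⁻¹ := by
    have := hcoc k⁻¹ k x
    rw [inv_mul_cancel, hone] at this
    exact eq_inv_of_mul_eq_one_left this.symm
  have hsame : h k (g • x) = h k x := by
    obtain ⟨p⟩ := hpath
    have hpre : IsPreconnected (Set.range p) :=
      (isConnected_range p.continuous).isPreconnected
    have h0 : x ∈ Set.range p := ⟨0, p.source⟩
    have h1 : g • x ∈ Set.range p := ⟨1, p.target⟩
    exact ((hlc k).apply_eq_of_isPreconnected hpre h1 h0)
  calc h (k * g * k⁻¹) (k • x)
      = h (k * g) (k⁻¹ • k • x) * h k⁻¹ (k • x) := hcoc (k * g) k⁻¹ (k • x)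
    _ = h (k * g) x * (h k x)⁻¹ := by rw [inv_smul_smul, hinv]
    _ = h k (g • x) * h g x * (h k x)⁻¹ := by rw [hcoc]
    _ = h g x := by rw [hsame, mul_comm (h k x), mul_assoc, mul_inv_cancel, mul_one]
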